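/- For every continuously differentiable function φ : ℝ → ℝ such that ‖φ‖ and ‖φ'‖ are finite, the function σ ↦ σ·φ(σ) also has finite norm, and ‖σ φ(σ)‖ ≤ 4 ( ‖φ'‖ + ‖φ‖ ). -/

import Mathlib

open MeasureTheory

/-- The Gaussian-weighted `L²` norm `‖φ‖ = (∫ φ(σ)² e^{-σ²/4} dσ)^{1/2}`. -/
noncomputable def gaussNorm (φ : ℝ → ℝ) : ℝ :=
  Real.sqrt (∫ σ : ℝ, (φ σ) ^ 2 * Real.exp (-σ ^ 2 / 4))

/-- If `φ : ℝ → ℝ` is `C¹` with `‖φ‖` and `‖φ'‖` finite (in the Gaussian-weighted `L²`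
sense), then `σ ↦ σ φ(σ)` also has finite norm, and `‖σ φ(σ)‖ ≤ 4 (‖φ'‖ + ‖φ‖)`. -/
theorem gaussNorm_mul_id_le
    (φ : ℝ → ℝ) (hφ : ContDiff ℝ 1 φ)
    (hint : Integrable (fun σ : ℝ => (φ σ) ^ 2 * Real.exp (-σ ^ 2 / 4)))
    (hint' : Integrable (fun σ : ℝ => (deriv φ σ) ^ 2 * Real.exp (-σ ^ 2 / 4))) :
    Integrable (fun σ : ℝ => (σ * φ σ) ^ 2 * Real.exp (-σ ^ 2 / 4)) ∧
      gaussNorm (fun σ => σ * φ σ) ≤ 4 * (gaussNorm (deriv φ) + gaussNorm φ) := by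
  set e : ℝ → ℝ := fun σ => Real.exp (-σ ^ 2 / 4) with he
  have hepos : ∀ σ, 0 < e σ := fun σ => Real.exp_pos _
  have hφc : Continuous φ := hφ.continuous
  have hφ'c : Continuous (deriv φ) := hφ.continuous_deriv le_rfl
  have hec : Continuous e := by
    apply Real.continuous_exp.comp; continuity
  -- the "boundary" function g and its derivative G
  set g : ℝ → ℝ := fun σ => σ * φ σ ^ 2 * e σ with hg
  set G : ℝ → ℝ := fun σ =>
    φ σ ^ 2 * e σ + 2 * σ * φ σ * deriv φ σ * e σ - σ ^ 2 / 2 * φ σ ^ 2 * e σ with hG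
  have hGc : Continuous G := by
    apply Continuous.sub
    · exact ((hφc.pow 2).mul hec).add
        ((((continuous_const.mul continuous_id).mul hφc).mul hφ'c).mul hec)
    · exact (((continuous_id.pow 2).div_const 2).mul (hφc.pow 2)).mul hec
  have hgderiv : ∀ σ : ℝ, HasDerivAt g (G σ) σ := by
    intro σ
    have hφd : HasDerivAt φ (deriv φ σ) σ :=
      ((hφ.differentiable one_ne_zero) σ).hasDerivAt
    have h2 : HasDerivAt (fun σ => φ σ ^ 2) (2 * φ σ * deriv φ σ) σ := by
      have := hφd.fun_pow 2
      simpa using this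
    have hin : HasDerivAt (fun σ : ℝ => -σ ^ 2 / 4) (-σ / 2) σ := by
      have := (((hasDerivAt_id σ).pow 2).neg).div_const 4
      exact this.congr_deriv (by simp only [id_eq]; ring)
    have hexp : HasDerivAt e (-σ / 2 * e σ) σ := by
      have := hin.exp
      simpa [he, mul_comm] using this
    have := (((hasDerivAt_id σ).mul h2).mul hexp)
    refine this.congr_deriv ?_
    simp only [hG, id_eq, Pi.mul_apply]
    ring
  -- the fundamental pointwise inequality:
  -- (σ φ)² e ≤ 4 φ² e + 16 φ'² e - 4 G
  have key : ∀ σ : ℝ, (σ * φ σ) ^ 2 * e σ ≤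
      4 * (φ σ ^ 2 * e σ) + 16 * (deriv φ σ ^ 2 * e σ) - 4 * G σ := by
    intro σ
    have h1 : 0 ≤ (σ * φ σ - 4 * deriv φ σ) ^ 2 * e σ :=
      mul_nonneg (sq_nonneg _) (hepos σ).le
    simp only [hG]
    nlinarith [h1]
  set IA : ℝ := ∫ σ : ℝ, φ σ ^ 2 * e σ with hIA
  set IB : ℝ := ∫ σ : ℝ, deriv φ σ ^ 2 *e σ with hIB
  have hIA0 : 0 ≤ IA := integral_nonneg fun σ => mul_nonneg (sq_nonneg _) (hepos σ).le
  have hIB0 : 0 ≤ IB := integral_nonneg fun σ => mul_nonneg (sq_nonneg _) (hepos σ).le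
  set f : ℝ → ℝ := fun σ => (σ * φ σ) ^ 2 * e σ with hf
  have hfc : Continuous f := ((continuous_id.mul hφc).pow 2).mul hec
  have hfnn : ∀ σ, 0 ≤ f σ := fun σ => mul_nonneg (sq_nonneg _) (hepos σ).le
  -- bound on truncated integrals
  have trunc : ∀ R : ℝ, 0 ≤ R → ∫ σ in (-R)..R, f σ ≤ 4 * IA + 16 * IB := by
    intro R hR
    have hle : -R ≤ R := by linarith
    have hGI : IntervalIntegrable G volume (-R) R := hGc.intervalIntegrable _ _
    have step1 : ∫ σ in (-R)..R, f σ ≤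
        ∫ σ in (-R)..R, (4 * (φ σ ^ 2 * e σ) + 16 * (deriv φ σ ^ 2 * e σ) - 4 * G σ) := by
      apply intervalIntegral.integral_mono_on hle (hfc.intervalIntegrable _ _)
      · exact ((((continuous_const.mul ((hφc.pow 2).mul hec)).add
          (continuous_const.mul ((hφ'c.pow 2).mul hec))).sub
          (continuous_const.mul hGc)).intervalIntegrable _ _)
      · intro σ _; exact key σ
    have step2 : ∫ σ in (-R)..R, (4 * (φ σ ^ 2 * e σ) + 16 * (deriv φ σ ^ 2 * e σ) - 4 * G σ)
        = 4 * (∫ σ in (-R)..R, φ σ ^ 2 * e σ) + 16 * (∫ σ in (-R)..R, deriv φ σ ^ 2 * e σ)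
          - 4 * (g R - g (-R)) := by
      have hFTC : ∫ σ in (-R)..R, G σ = g R - g (-R) :=
        intervalIntegral.integral_eq_sub_of_hasDerivAt (fun x _ => hgderiv x) hGI
      rw [intervalIntegral.integral_sub, intervalIntegral.integral_add,
        intervalIntegral.integral_const_mul, intervalIntegral.integral_const_mul,
        intervalIntegral.integral_const_mul, hFTC]
      · exact (continuous_const.mul ((hφc.pow 2).mul hec)).intervalIntegrable _ _
      · exact (continuous_const.mul ((hφ'c.pow 2).mul hec)).intervalIntegrable _ _
      · exact ((continuous_const.mul ((hφc.pow 2).mul hec)).add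
          (continuous_const.mul ((hφ'c.pow 2).mul hec))).intervalIntegrable _ _
      · exact continuous_const.mul hGc |>.intervalIntegrable _ _
    have hgR : 0 ≤ g R - g (-R) := by
      have h1 : 0 ≤ g R := mul_nonneg (mul_nonneg hR (sq_nonneg _)) (hepos R).le
      have h2 : g (-R) ≤ 0 := by
        have : g (-R) = -(R * φ (-R) ^ 2 * e (-R)) := by simp only [hg]; ring
        rw [this]
        exact neg_nonpos.mpr (mul_nonneg (mul_nonneg hR (sq_nonneg _)) (hepos _).le)
      linarith
    have hA : ∫ σ in (-R)..R, φ σ ^ 2 * e σ ≤ IA := by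
      rw [intervalIntegral.integral_of_le hle]
      exact setIntegral_le_integral hint
        (Filter.Eventually.of_forall fun σ => mul_nonneg (sq_nonneg _) (hepos σ).le)
    have hB : ∫ σ in (-R)..R, deriv φ σ ^ 2 * e σ ≤ IB := by
      rw [intervalIntegral.integral_of_le hle]
      exact setIntegral_le_integral hint'
        (Filter.Eventually.of_forall fun σ => mul_nonneg (sq_nonneg _) (hepos σ).le)
    calc ∫ σ in (-R)..R, f σ ≤ _ := step1
      _ = _ := step2
      _ ≤ 4 * IA + 16 * IB := by linarith
  -- integrability
  have hfint : Integrable f := by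
    apply MeasureTheory.integrable_of_intervalIntegral_norm_bounded
      (l := (Filter.atTop : Filter ℕ)) (a := fun n : ℕ => -(n : ℝ)) (b := fun n : ℕ => (n : ℝ)) (4 * IA + 16 * IB)
    · intro n; exact (hfc.integrableOn_Ioc)
    · exact Filter.tendsto_neg_atBot_iff.mpr tendsto_natCast_atTop_atTop
    · exact tendsto_natCast_atTop_atTop
    · refine Filter.Eventually.of_forall fun n => ?_
      have : ∀ σ, ‖f σ‖ = f σ := fun σ => Real.norm_of_nonneg (hfnn σ)
      calc ∫ σ in (-(n:ℝ))..(n:ℝ), ‖f σ‖ = ∫ σ in (-(n:ℝ))..(n:ℝ), f σ := by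
            simp [this]
        _ ≤ 4 * IA + 16 * IB := trunc _ (Nat.cast_nonneg n)
  refine ⟨hfint, ?_⟩
  -- bound on the full integral
  have hfull : ∫ σ : ℝ, f σ ≤ 4 * IA + 16 * IB := by
    have htend := MeasureTheory.intervalIntegral_tendsto_integral hfint
      (Filter.tendsto_neg_atBot_iff.mpr tendsto_natCast_atTop_atTop)
      (tendsto_natCast_atTop_atTop (R := ℝ))
    exact le_of_tendsto htend
      (Filter.Eventually.of_forall fun n => trunc _ (Nat.cast_nonneg n))
  -- final sqrt arithmetic
  have hAeq : gaussNorm φ = Real.sqrt IA := rfl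
  have hBeq : gaussNorm (deriv φ) = Real.sqrt IB := rfl
  have hsA : Real.sqrt IA ^ 2 = IA := Real.sq_sqrt hIA0
  have hsB : Real.sqrt IB ^ 2 = IB := Real.sq_sqrt hIB0
  have hmain : gaussNorm (fun σ => σ * φ σ) = Real.sqrt (∫ σ : ℝ, f σ) := rfl
  rw [hmain, hAeq, hBeq]
  have h1 : Real.sqrt (∫ σ : ℝ, f σ) ≤ Real.sqrt (4 * IA + 16 * IB) :=
    Real.sqrt_le_sqrt hfull
  have h2 : Real.sqrt (4 * IA + 16 * IB) ≤ 2 * Real.sqrt IA + 4 * Real.sqrt IB := by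
    rw [show 2 * Real.sqrt IA + 4 * Real.sqrt IB =
      Real.sqrt ((2 * Real.sqrt IA + 4 * Real.sqrt IB) ^ 2) from
      (Real.sqrt_sq (by positivity)).symm]
    apply Real.sqrt_le_sqrt
    nlinarith [Real.sqrt_nonneg IA, Real.sqrt_nonneg IB]
  have h3 : 2 * Real.sqrt IA + 4 * Real.sqrt IB ≤
      4 * (Real.sqrt IB + Real.sqrt IA) := by
    nlinarith [Real.sqrt_nonneg IA, Real.sqrt_nonneg IB]
  linarith
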